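/- Let ℓ ≥ 0 be an integer, set ρ_j = ℓ/2 + 1 − j for j = 1,…,ℓ+1, let λ = (λ_1,…,λ_{ℓ+1}) ∈ ℝ^{ℓ+1}, and let s ∈ ℂ with Im s < 0. Then the integral over t = (t_1,…,t_{ℓ+1}) ∈ ℝ^{ℓ+1} and over the ℓ(ℓ+1)/2 variables n_{ij} (1 ≤ j < i ≤ ℓ+1) 2^{ℓ+1} ∫_{ℝ^{ℓ+1}} ∫_{ℝ^{ℓ(ℓ+1)/2}} exp( Σ_{1≤i<j≤ℓ+1}(t_i − t_j) + (is + ℓ/2) Σ_{j=1}^{ℓ+1} t_j + Σ_{j=1}^{ℓ+1}(iλ_j − ρ_j) t_j − π Σ_{j=1}^{ℓ+1} e^{2t_j} − π Σ_{1≤j<i≤ℓ+1} n_{ij}² e^{2t_j} ) Π dn_{ij} Π dt_j converges absolutely and equals Π_{j=1}^{ℓ+1} π^{−(is+iλ_j)/2} Γ( (is + iλ_j)/2 ), the local Archimedean L-factor L(s, −λ). -/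

import Mathlib

open MeasureTheory Finset

/-- Index set of the lower-triangular entries `n_{ij}`, `1 ≤ j < i ≤ ℓ+1`. -/
abbrev LowerIdx (ℓ : ℕ) := {p : Fin (ℓ+1) × Fin (ℓ+1) // p.2 < p.1}

namespace BaxterAux



lemma image_exp2 : (fun τ : ℝ => Real.exp (2 * τ)) '' Set.univ = Set.Ioi 0 := by
  rw [Set.image_univ]
  ext x
  simp only [Set.mem_range, Set.mem_Ioi]
  constructor
  · rintro ⟨τ, rfl⟩; exact Real.exp_pos _
  · intro hx
    exact ⟨Real.log x / 2, by rw [mul_div_cancel₀ _ (two_ne_zero), Real.exp_log hx]⟩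

lemma deriv_exp2 (τ : ℝ) :
    HasDerivWithinAt (fun τ : ℝ => Real.exp (2 * τ)) (2 * Real.exp (2 * τ)) Set.univ τ := by
  have h : HasDerivAt (fun τ : ℝ => Real.exp (2 * τ)) (Real.exp (2 * τ) * 2) τ :=
    (Real.hasDerivAt_exp (2 * τ)).comp τ (by simpa using (hasDerivAt_id τ).const_mul (2:ℝ))
  rw [mul_comm] at h
  exact h.hasDerivWithinAt

lemma injOn_exp2 : Set.InjOn (fun τ : ℝ => Real.exp (2 * τ)) Set.univ := by
  intro a _ b _ h
  have := Real.exp_injective h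
  linarith

lemma gamma_int {c : ℂ} (hc : 0 < c.re) :
    IntegrableOn (fun u : ℝ => (u:ℂ) ^ (c - 1) * Complex.exp (-((Real.pi : ℂ) * u)))
      (Set.Ioi 0) := by
  have h := Complex.GammaIntegral_convergent hc
  rw [← mul_zero Real.pi, ← integrableOn_Ioi_comp_mul_left_iff _ _ Real.pi_pos] at h
  refine IntegrableOn.congr_fun (h.const_mul ((Real.pi : ℂ) ^ (-(c - 1))))
    (fun t ht => ?_) measurableSet_Ioi
  rw [Set.mem_Ioi] at ht
  have hπ : (0:ℝ) ≤ Real.pi := Real.pi_pos.le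
  rw [Complex.ofReal_mul, Complex.mul_cpow_ofReal_nonneg hπ ht.le]
  rw [Complex.cpow_neg]
  have hne : ((Real.pi : ℂ)) ^ (c - 1) ≠ 0 := by
    rw [Ne, Complex.cpow_eq_zero_iff, not_and_or]
    exact Or.inl (Complex.ofReal_ne_zero.mpr Real.pi_pos.ne')
  field_simp
  push_cast
  ring

lemma smul_eq (c : ℂ) (τ : ℝ) :
    |2 * Real.exp (2 * τ)| • (((Real.exp (2 * τ) : ℝ) : ℂ) ^ (c/2 - 1) *
      Complex.exp (-((Real.pi : ℂ) * (Real.exp (2 * τ) : ℝ)))) =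
    2 * Complex.exp (c * τ - (Real.pi : ℂ) * (Real.exp (2 * τ) : ℝ)) := by
  rw [abs_of_pos (by positivity), Complex.real_smul]
  push_cast
  rw [Complex.cpow_def_of_ne_zero (Complex.exp_ne_zero _),
    Complex.log_exp (by simp [neg_lt_zero, Real.pi_pos]) (by simp [Real.pi_pos.le])]
  rw [mul_assoc, ← Complex.exp_add, ← Complex.exp_add]
  congr 1
  ring

lemma h2re {c : ℂ} (hc : 0 < c.re) : 0 < (c / 2).re := by
  rw [show (2:ℂ) = ((2:ℝ):ℂ) from by norm_num, Complex.div_ofReal_re]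
  exact half_pos hc

lemma hpow (c : ℂ) : ((1:ℂ)/(Real.pi : ℂ)) ^ (c/2)
    = Complex.exp (-(c/2) * ((Real.log Real.pi : ℝ) : ℂ)) := by
  rw [show ((1:ℂ)/(Real.pi : ℂ)) = ((Real.pi⁻¹ : ℝ) : ℂ) from by push_cast; ring]
  rw [Complex.cpow_def_of_ne_zero
    (Complex.ofReal_ne_zero.mpr (by positivity))]
  rw [← Complex.ofReal_log (by positivity), Real.log_inv]
  push_cast
  ring_nf

lemma integral_one_var {c : ℂ} (hc : 0 < c.re) :
    ∫ τ : ℝ, Complex.exp (c * τ - (Real.pi : ℂ) * (Real.exp (2 * τ) : ℝ)) =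
    (1/2 : ℂ) * Complex.exp (-(c/2) * ((Real.log Real.pi : ℝ) : ℂ)) * Complex.Gamma (c/2) := by
  have key := integral_image_eq_integral_abs_deriv_smul MeasurableSet.univ
    (fun x _ => deriv_exp2 x) injOn_exp2
    (fun u : ℝ => (u : ℂ) ^ (c/2 - 1) * Complex.exp (-((Real.pi : ℂ) * u)))
  rw [image_exp2, Measure.restrict_univ] at key
  simp_rw [smul_eq c] at key
  rw [MeasureTheory.integral_const_mul] at key
  have hval := Complex.integral_cpow_mul_exp_neg_mul_Ioi (h2re hc) Real.pi_pos
  rw [hval, hpow c] at key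
  linear_combination -key/2

lemma integrable_one_var {c : ℂ} (hc : 0 < c.re) :
    Integrable (fun τ : ℝ => Complex.exp (c * τ - (Real.pi : ℂ) * (Real.exp (2 * τ) : ℝ))) := by
  have h3 : IntegrableOn (fun τ : ℝ => |2 * Real.exp (2 * τ)| •
      (((Real.exp (2 * τ) : ℝ) : ℂ) ^ (c/2 - 1) *
        Complex.exp (-((Real.pi : ℂ) * (Real.exp (2 * τ) : ℝ))))) Set.univ := by
    refine (integrableOn_image_iff_integrableOn_abs_deriv_smul MeasurableSet.univ
      (fun x _ => deriv_exp2 x) injOn_exp2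
      (fun u : ℝ => (u : ℂ) ^ (c/2 - 1) * Complex.exp (-((Real.pi : ℂ) * u)))).mp ?_
    rw [image_exp2]
    exact gamma_int (h2re hc)
  rw [integrableOn_univ] at h3
  simp_rw [smul_eq c] at h3
  exact (integrable_const_mul_iff (isUnit_iff_ne_zero.mpr two_ne_zero) _).mp h3

lemma sum_sum_Ioi {M : Type*} [AddCommMonoid M] {n : ℕ} (f : Fin n → M) :
    ∑ i : Fin n, ∑ j ∈ Ioi i, f j = ∑ j : Fin n, (Iio j).card • f j := by
  rw [Finset.sum_sigma']
  rw [show (∑ j : Fin n, (Iio j).card • f j) = ∑ j : Fin n, ∑ i ∈ Iio j, f j from by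
    simp [Finset.sum_const]]
  rw [Finset.sum_sigma']
  refine Finset.sum_nbij' (i := fun x => ⟨x.2, x.1⟩) (j := fun x => ⟨x.2, x.1⟩) ?_ ?_ ?_ ?_ ?_
  · intro a ha; simp only [Finset.mem_sigma, Finset.mem_Ioi, Finset.mem_Iio,
      Finset.mem_univ, true_and] at *; exact ha
  · intro a ha; simp only [Finset.mem_sigma, Finset.mem_Ioi, Finset.mem_Iio,
      Finset.mem_univ, true_and] at *; exact ha
  · intro a _; rfl
  · intro a _; rfl
  · intro a _; rfl

lemma sum_lowerIdx {ℓ : ℕ} (h : Fin (ℓ+1) → ℂ) :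
    ∑ q : LowerIdx ℓ, h q.1.2 = ∑ j : Fin (ℓ+1), (Ioi j).card • h j := by
  have step1 : ∑ q : LowerIdx ℓ, h q.1.2
      = ∑ x : (Σ j : Fin (ℓ+1), {i : Fin (ℓ+1) // j < i}), h x.1 :=
    (Equiv.sum_comp (⟨fun x => ⟨(x.2.1, x.1), x.2.2⟩,
      fun q => ⟨q.1.2, ⟨q.1.1, q.2⟩⟩, fun x => rfl, fun q => rfl⟩ :
      (Σ j : Fin (ℓ+1), {i : Fin (ℓ+1) // j < i}) ≃ LowerIdx ℓ)
      (fun q : LowerIdx ℓ => h q.1.2)).symm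
  rw [step1, ← Finset.univ_sigma_univ, Finset.sum_sigma]
  refine Finset.sum_congr rfl fun j _ => ?_
  show ∑ _i : {i : Fin (ℓ+1) // j < i}, h j = _
  rw [Finset.sum_const, Finset.card_univ, Fintype.card_subtype]
  congr 1
  simp [Finset.filter_lt_eq_Ioi]

lemma double_sum_eq {n : ℕ} (t : Fin n → ℝ) :
    (∑ i : Fin n, ∑ j ∈ Ioi i, ((t i - t j : ℝ) : ℂ))
      = ∑ j : Fin n, ((((Ioi j).card : ℕ) : ℂ) - ((j : ℕ) : ℂ)) * (t j : ℂ) := by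
  have h1 : (∑ i : Fin n, ∑ j ∈ Ioi i, ((t i - t j : ℝ) : ℂ))
      = (∑ i : Fin n, ∑ j ∈ Ioi i, (t i : ℂ)) - (∑ i : Fin n, ∑ j ∈ Ioi i, (t j : ℂ)) := by
    rw [← Finset.sum_sub_distrib]
    refine Finset.sum_congr rfl fun i _ => ?_
    rw [← Finset.sum_sub_distrib]
    refine Finset.sum_congr rfl fun j _ => ?_
    push_cast; ring
  rw [h1, sum_sum_Ioi (fun j => (t j : ℂ))]
  simp_rw [Finset.sum_const]
  rw [← Finset.sum_sub_distrib]
  refine Finset.sum_congr rfl fun j _ => ?_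
  rw [Fin.card_Iio]
  push_cast [nsmul_eq_mul]
  ring

lemma key_identity (ℓ : ℕ) (s : ℂ) (lam : Fin (ℓ+1) → ℝ) (t : Fin (ℓ+1) → ℝ)
    (n : LowerIdx ℓ → ℝ) :
    (∑ i : Fin (ℓ+1), ∑ j ∈ Ioi i, ((t i - t j : ℝ) : ℂ))
        + (Complex.I * s + (ℓ : ℂ)/2) * (∑ j : Fin (ℓ+1), (t j : ℂ))
        + (∑ j : Fin (ℓ+1),
            (Complex.I * (lam j) - ((ℓ : ℂ)/2 + 1 - ((j : ℕ) + 1))) * (t j : ℂ))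
        - (Real.pi : ℂ) * ∑ j : Fin (ℓ+1), (Real.exp (2 * t j) : ℂ)
        - (Real.pi : ℂ) * ∑ q : LowerIdx ℓ,
            (n q : ℂ)^2 * (Real.exp (2 * t q.1.2) : ℂ)
    = (∑ j : Fin (ℓ+1), ((Complex.I * s + Complex.I * (lam j)) * (t j : ℂ)
          - (Real.pi : ℂ) * (Real.exp (2 * t j) : ℂ)))
      + ∑ q : LowerIdx ℓ, ((t q.1.2 : ℂ)
          - (Real.pi : ℂ) * (n q : ℂ)^2 * (Real.exp (2 * t q.1.2) : ℂ)) := by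
  have hq : ∑ q : LowerIdx ℓ, ((t q.1.2 : ℂ)
        - (Real.pi : ℂ) * (n q : ℂ)^2 * (Real.exp (2 * t q.1.2) : ℂ))
      = (∑ j : Fin (ℓ+1), ((Ioi j).card • (t j : ℂ)))
        - (Real.pi : ℂ) * ∑ q : LowerIdx ℓ, (n q : ℂ)^2 * (Real.exp (2 * t q.1.2) : ℂ) := by
    rw [Finset.sum_sub_distrib, sum_lowerIdx (fun j => (t j : ℂ)), Finset.mul_sum]
    congr 1
    exact Finset.sum_congr rfl fun q _ => by ring
  rw [double_sum_eq, hq, ← add_sub_assoc]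
  congr 1
  rw [Finset.mul_sum, ← Finset.sum_add_distrib, ← Finset.sum_add_distrib,
    Finset.mul_sum, ← Finset.sum_sub_distrib, ← Finset.sum_add_distrib]
  refine Finset.sum_congr rfl fun j _ => ?_
  push_cast [nsmul_eq_mul]
  ring


section Main

variable (ℓ : ℕ) (s : ℂ) (lam : Fin (ℓ+1) → ℝ)

lemma hHint (τ : ℝ) : Integrable (fun x : ℝ => Complex.exp ((τ : ℂ)
    - (Real.pi : ℂ) * (x : ℂ)^2 * (Real.exp (2 * τ) : ℝ))) := by
  have hb' : 0 < (((Real.pi * Real.exp (2 * τ) : ℝ) : ℂ)).re := by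
    rw [Complex.ofReal_re]; positivity
  have heq : (fun x : ℝ => Complex.exp ((τ : ℂ)
        - (Real.pi : ℂ) * (x : ℂ)^2 * (Real.exp (2 * τ) : ℝ)))
      = fun x : ℝ => Complex.exp (τ : ℂ) *
          Complex.exp (-(((Real.pi * Real.exp (2 * τ) : ℝ) : ℂ)) * (x : ℂ)^2) := by
    funext x; rw [← Complex.exp_add]; congr 1; push_cast; ring
  rw [heq]
  exact (integrable_cexp_neg_mul_sq hb').const_mul _

lemma hHval (τ : ℝ) : (∫ x : ℝ, Complex.exp ((τ : ℂ)
    - (Real.pi : ℂ) * (x : ℂ)^2 * (Real.exp (2 * τ) : ℝ))) = 1 := by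
  have hb' : 0 < (((Real.pi * Real.exp (2 * τ) : ℝ) : ℂ)).re := by
    rw [Complex.ofReal_re]; positivity
  have heq : (fun x : ℝ => Complex.exp ((τ : ℂ)
        - (Real.pi : ℂ) * (x : ℂ)^2 * (Real.exp (2 * τ) : ℝ)))
      = fun x : ℝ => Complex.exp (τ : ℂ) *
          Complex.exp (-(((Real.pi * Real.exp (2 * τ) : ℝ) : ℂ)) * (x : ℂ)^2) := by
    funext x; rw [← Complex.exp_add]; congr 1; push_cast; ring
  rw [heq, MeasureTheory.integral_const_mul, integral_gaussian_complex hb']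
  have h1 : ((Real.pi : ℂ) / ((Real.pi * Real.exp (2 * τ) : ℝ) : ℂ))
      = ((Real.exp (-(2 * τ)) : ℝ) : ℂ) := by
    rw [← Complex.ofReal_div]
    congr 1
    rw [Real.exp_neg]
    field_simp
  rw [h1, show (1/2 : ℂ) = ((1/2 : ℝ) : ℂ) from by norm_num,
    ← Complex.ofReal_cpow (Real.exp_nonneg _),
    ← Real.exp_mul]
  rw [show -(2 * τ) * (1/2) = -τ from by ring, Complex.ofReal_exp, ← Complex.exp_add]
  push_cast
  simp

lemma hHnorm (τ : ℝ) : (∫ x : ℝ, ‖Complex.exp ((τ : ℂ)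
    - (Real.pi : ℂ) * (x : ℂ)^2 * (Real.exp (2 * τ) : ℝ))‖) = 1 := by
  have hn : ∀ x : ℝ, ‖Complex.exp ((τ : ℂ)
      - (Real.pi : ℂ) * (x : ℂ)^2 * (Real.exp (2 * τ) : ℝ))‖
      = Real.exp τ * Real.exp (-(Real.pi * Real.exp (2 * τ)) * x^2) := by
    intro x
    rw [show ((τ : ℂ) - (Real.pi : ℂ) * (x : ℂ)^2 * ((Real.exp (2 * τ) : ℝ) : ℂ))
        = ((τ - Real.pi * Real.exp (2 * τ) * x^2 : ℝ) : ℂ) from by push_cast; ring]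
    rw [Complex.norm_exp_ofReal, ← Real.exp_add]
    congr 1
    ring
  simp_rw [hn]
  rw [MeasureTheory.integral_const_mul, integral_gaussian]
  have h2 : Real.pi / (Real.pi * Real.exp (2 * τ)) = (Real.exp (-τ))^2 := by
    rw [sq, ← Real.exp_add, div_eq_iff (by positivity), ← mul_assoc, mul_comm _ Real.pi,
      mul_assoc, ← Real.exp_add]
    rw [show -τ + -τ + 2 * τ = 0 from by ring, Real.exp_zero, mul_one]
  rw [h2, Real.sqrt_sq (Real.exp_nonneg _), ← Real.exp_add]
  simp

lemma hre (hs : s.im < 0) : ∀ j : Fin (ℓ+1), 0 < (Complex.I * s + Complex.I * (lam j)).re := by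
  intro j
  have : (Complex.I * s + Complex.I * (lam j)).re = -s.im := by simp
  rw [this]; linarith

set_option maxHeartbeats 1000000 in
lemma hcont : Continuous (fun p : (Fin (ℓ+1) → ℝ) × (LowerIdx ℓ → ℝ) =>
    (∏ j : Fin (ℓ+1), Complex.exp ((Complex.I * s + Complex.I * (lam j)) * (p.1 j)
        - (Real.pi : ℂ) * (Real.exp (2 * p.1 j) : ℝ))) *
    (∏ q : LowerIdx ℓ, Complex.exp (((p.1 q.1.2 : ℝ) : ℂ)
        - (Real.pi : ℂ) * ((p.2 q : ℝ) : ℂ)^2 * (Real.exp (2 * p.1 q.1.2) : ℝ)))) := by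
  fun_prop

set_option maxHeartbeats 1000000 in
lemma hint (hs : s.im < 0) : Integrable (fun p : (Fin (ℓ+1) → ℝ) × (LowerIdx ℓ → ℝ) =>
    (∏ j : Fin (ℓ+1), Complex.exp ((Complex.I * s + Complex.I * (lam j)) * (p.1 j)
        - (Real.pi : ℂ) * (Real.exp (2 * p.1 j) : ℝ))) *
    (∏ q : LowerIdx ℓ, Complex.exp (((p.1 q.1.2 : ℝ) : ℂ)
        - (Real.pi : ℂ) * ((p.2 q : ℝ) : ℂ)^2 * (Real.exp (2 * p.1 q.1.2) : ℝ))))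
    ((volume : Measure (Fin (ℓ+1) → ℝ)).prod (volume : Measure (LowerIdx ℓ → ℝ))) := by
  refine (integrable_prod_iff (hcont ℓ s lam).aestronglyMeasurable).mpr ⟨?_, ?_⟩
  · refine Filter.Eventually.of_forall (fun t => ?_)
    show Integrable (fun n : LowerIdx ℓ → ℝ =>
      (∏ j : Fin (ℓ+1), Complex.exp ((Complex.I * s + Complex.I * (lam j)) * (t j)
          - (Real.pi : ℂ) * (Real.exp (2 * t j) : ℝ))) *
      (∏ q : LowerIdx ℓ, Complex.exp (((t q.1.2 : ℝ) : ℂ)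
          - (Real.pi : ℂ) * ((n q : ℝ) : ℂ)^2 * (Real.exp (2 * t q.1.2) : ℝ)))) volume
    exact (Integrable.fintype_prod (f := fun (q : LowerIdx ℓ) (x : ℝ) =>
      Complex.exp (((t q.1.2 : ℝ) : ℂ)
        - (Real.pi : ℂ) * (x : ℂ)^2 * (Real.exp (2 * t q.1.2) : ℝ)))
      (fun q => hHint _)).const_mul _
  · have hfun : (fun t : Fin (ℓ+1) → ℝ => ∫ n : LowerIdx ℓ → ℝ,
        ‖(∏ j : Fin (ℓ+1), Complex.exp ((Complex.I * s + Complex.I * (lam j)) * (t j)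
            - (Real.pi : ℂ) * (Real.exp (2 * t j) : ℝ))) *
          (∏ q : LowerIdx ℓ, Complex.exp (((t q.1.2 : ℝ) : ℂ)
            - (Real.pi : ℂ) * ((n q : ℝ) : ℂ)^2 * (Real.exp (2 * t q.1.2) : ℝ)))‖)
        = fun t => ∏ j : Fin (ℓ+1),
            ‖Complex.exp ((Complex.I * s + Complex.I * (lam j)) * (t j)
              - (Real.pi : ℂ) * (Real.exp (2 * t j) : ℝ))‖ := by
      funext t
      simp_rw [norm_mul, norm_prod]
      rw [MeasureTheory.integral_const_mul,
        integral_fintype_prod_volume_eq_prod (f := fun (q : LowerIdx ℓ) (x : ℝ) =>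
          ‖Complex.exp (((t q.1.2 : ℝ) : ℂ)
            - (Real.pi : ℂ) * (x : ℂ)^2 * (Real.exp (2 * t q.1.2) : ℝ))‖)]
      simp only [hHnorm, Finset.prod_const_one, mul_one]
    rw [hfun]
    exact Integrable.fintype_prod (f := fun (j : Fin (ℓ+1)) (τ : ℝ) =>
      ‖Complex.exp ((Complex.I * s + Complex.I * (lam j)) * τ
        - (Real.pi : ℂ) * (Real.exp (2 * τ) : ℝ))‖)
      (fun j => (BaxterAux.integrable_one_var (hre ℓ s lam hs j)).norm)

set_option maxHeartbeats 1000000 in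
lemma hval (hs : s.im < 0) :
    (∫ p : (Fin (ℓ+1) → ℝ) × (LowerIdx ℓ → ℝ),
      ((∏ j : Fin (ℓ+1), Complex.exp ((Complex.I * s + Complex.I * (lam j)) * (p.1 j)
          - (Real.pi : ℂ) * (Real.exp (2 * p.1 j) : ℝ))) *
        (∏ q : LowerIdx ℓ, Complex.exp (((p.1 q.1.2 : ℝ) : ℂ)
          - (Real.pi : ℂ) * ((p.2 q : ℝ) : ℂ)^2 * (Real.exp (2 * p.1 q.1.2) : ℝ))))
      ∂((volume : Measure (Fin (ℓ+1) → ℝ)).prod (volume : Measure (LowerIdx ℓ → ℝ))))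
    = ∏ j : Fin (ℓ+1), ((1/2 : ℂ) *
        Complex.exp (-((Complex.I * s + Complex.I * (lam j))/2) * ((Real.log Real.pi : ℝ) : ℂ)) *
        Complex.Gamma ((Complex.I * s + Complex.I * (lam j))/2)) := by
  rw [MeasureTheory.integral_prod _ (hint ℓ s lam hs)]
  have inner : ∀ t : Fin (ℓ+1) → ℝ, (∫ n : LowerIdx ℓ → ℝ,
      (∏ j : Fin (ℓ+1), Complex.exp ((Complex.I * s + Complex.I * (lam j)) * (t j)
          - (Real.pi : ℂ) * (Real.exp (2 * t j) : ℝ))) *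
        (∏ q : LowerIdx ℓ, Complex.exp (((t q.1.2 : ℝ) : ℂ)
          - (Real.pi : ℂ) * ((n q : ℝ) : ℂ)^2 * (Real.exp (2 * t q.1.2) : ℝ))))
      = ∏ j : Fin (ℓ+1), Complex.exp ((Complex.I * s + Complex.I * (lam j)) * (t j)
          - (Real.pi : ℂ) * (Real.exp (2 * t j) : ℝ)) := by
    intro t
    rw [MeasureTheory.integral_const_mul,
      integral_fintype_prod_volume_eq_prod (f := fun (q : LowerIdx ℓ) (x : ℝ) =>
        Complex.exp (((t q.1.2 : ℝ) : ℂ)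
          - (Real.pi : ℂ) * (x : ℂ)^2 * (Real.exp (2 * t q.1.2) : ℝ)))]
    simp only [hHval, Finset.prod_const_one, mul_one]
  simp_rw [inner]
  rw [integral_fintype_prod_volume_eq_prod (f := fun (j : Fin (ℓ+1)) (τ : ℝ) =>
    Complex.exp ((Complex.I * s + Complex.I * (lam j)) * τ
      - (Real.pi : ℂ) * (Real.exp (2 * τ) : ℝ)))]
  exact Finset.prod_congr rfl fun j _ => BaxterAux.integral_one_var (hre ℓ s lam hs j)

end Main

end BaxterAux

set_option maxHeartbeats 1000000 in
/-- The coordinate form of the eigenvalue computation for the universal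
Baxter operator acting on the spherical function of `GL_{ℓ+1}(ℝ)`. -/
theorem baxter_eigenvalue_L_factor (ℓ : ℕ) (s : ℂ) (hs : s.im < 0)
    (lam : Fin (ℓ+1) → ℝ) :
    Integrable (fun p : (Fin (ℓ+1) → ℝ) × (LowerIdx ℓ → ℝ) =>
      Complex.exp ((∑ i : Fin (ℓ+1), ∑ j ∈ Ioi i, ((p.1 i - p.1 j : ℝ) : ℂ))
        + (Complex.I * s + (ℓ : ℂ)/2) * (∑ j : Fin (ℓ+1), (p.1 j : ℂ))
        + (∑ j : Fin (ℓ+1),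
            (Complex.I * (lam j) - ((ℓ : ℂ)/2 + 1 - ((j : ℕ) + 1))) * (p.1 j : ℂ))
        - (Real.pi : ℂ) * ∑ j : Fin (ℓ+1), (Real.exp (2 * p.1 j) : ℂ)
        - (Real.pi : ℂ) * ∑ q : LowerIdx ℓ,
            (p.2 q : ℂ)^2 * (Real.exp (2 * p.1 q.1.2) : ℂ))) ∧
    (2 : ℂ) ^ (ℓ+1) *
      (∫ p : (Fin (ℓ+1) → ℝ) × (LowerIdx ℓ → ℝ),
        Complex.exp ((∑ i : Fin (ℓ+1), ∑ j ∈ Ioi i, ((p.1 i - p.1 j : ℝ) : ℂ))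
          + (Complex.I * s + (ℓ : ℂ)/2) * (∑ j : Fin (ℓ+1), (p.1 j : ℂ))
          + (∑ j : Fin (ℓ+1),
              (Complex.I * (lam j) - ((ℓ : ℂ)/2 + 1 - ((j : ℕ) + 1))) * (p.1 j : ℂ))
          - (Real.pi : ℂ) * ∑ j : Fin (ℓ+1), (Real.exp (2 * p.1 j) : ℂ)
          - (Real.pi : ℂ) * ∑ q : LowerIdx ℓ,
              (p.2 q : ℂ)^2 * (Real.exp (2 * p.1 q.1.2) : ℂ)))
    = ∏ j : Fin (ℓ+1),
        Complex.exp (-((Complex.I * s + Complex.I * (lam j))/2) * (Real.log Real.pi : ℂ)) *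
          Complex.Gamma ((Complex.I * s + Complex.I * (lam j))/2) := by
  have hFG : (fun p : (Fin (ℓ+1) → ℝ) × (LowerIdx ℓ → ℝ) =>
      Complex.exp ((∑ i : Fin (ℓ+1), ∑ j ∈ Ioi i, ((p.1 i - p.1 j : ℝ) : ℂ))
        + (Complex.I * s + (ℓ : ℂ)/2) * (∑ j : Fin (ℓ+1), (p.1 j : ℂ))
        + (∑ j : Fin (ℓ+1),
            (Complex.I * (lam j) - ((ℓ : ℂ)/2 + 1 - ((j : ℕ) + 1))) * (p.1 j : ℂ))
        - (Real.pi : ℂ) * ∑ j : Fin (ℓ+1), (Real.exp (2 * p.1 j) : ℂ)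
        - (Real.pi : ℂ) * ∑ q : LowerIdx ℓ,
            (p.2 q : ℂ)^2 * (Real.exp (2 * p.1 q.1.2) : ℂ)))
      = fun p : (Fin (ℓ+1) → ℝ) × (LowerIdx ℓ → ℝ) =>
        (∏ j : Fin (ℓ+1), Complex.exp ((Complex.I * s + Complex.I * (lam j)) * (p.1 j)
            - (Real.pi : ℂ) * (Real.exp (2 * p.1 j) : ℝ))) *
        (∏ q : LowerIdx ℓ, Complex.exp (((p.1 q.1.2 : ℝ) : ℂ)
            - (Real.pi : ℂ) * ((p.2 q : ℝ) : ℂ)^2 * (Real.exp (2 * p.1 q.1.2) : ℝ))) := by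
    funext p
    rw [BaxterAux.key_identity ℓ s lam p.1 p.2, Complex.exp_add,
      Complex.exp_sum, Complex.exp_sum]
  constructor
  · rw [hFG, MeasureTheory.Measure.volume_eq_prod]
    exact BaxterAux.hint ℓ s lam hs
  · rw [hFG]
    rw [show (volume : Measure ((Fin (ℓ+1) → ℝ) × (LowerIdx ℓ → ℝ)))
        = (volume : Measure (Fin (ℓ+1) → ℝ)).prod (volume : Measure (LowerIdx ℓ → ℝ))
      from MeasureTheory.Measure.volume_eq_prod _ _]
    rw [BaxterAux.hval ℓ s lam hs]
    rw [Finset.prod_congr rfl (fun (j : Fin (ℓ+1)) _ => mul_assoc (1/2 : ℂ) _ _),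
      Finset.prod_mul_distrib, Finset.prod_const, Finset.card_univ, Fintype.card_fin,
      ← mul_assoc, ← mul_pow]
    norm_num
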